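/- If m is prime, then the function g_m is injective on the positive integers: for 0 < n < n', g_m(n) ≠ g_m(n'). -/

import Mathlib

/-- An `m`-product sequence (as a multiset): a nonempty multiset of positive
integers in which no value occurs `m` or more times and whose product is a
perfect `m`-th power. -/
def IsMProdSeq (m : ℕ) (M : Multiset ℕ) : Prop :=
  M ≠ 0 ∧ (∀ a ∈ M, 0 < a) ∧ (∀ a, M.count a < m) ∧ ∃ R : ℕ, M.prod = R ^ m

/-- `gm m n`: the least `s` such that some `m`-product sequence has smallest
term `n` and largest term `s`. -/
noncomputable def gm (m n : ℕ) : ℕ :=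
  sInf {s | ∃ M : Multiset ℕ, IsMProdSeq m M ∧ n ∈ M ∧ s ∈ M ∧ ∀ a ∈ M, n ≤ a ∧ a ≤ s}

lemma gm_set_nonempty (m n : ℕ) (hm : 2 ≤ m) (hn : 0 < n) :
    {s | ∃ M : Multiset ℕ, IsMProdSeq m M ∧ n ∈ M ∧ s ∈ M ∧
      ∀ a ∈ M, n ≤ a ∧ a ≤ s}.Nonempty := by
  rcases eq_or_lt_of_le (show 1 ≤ n from hn) with h1 | h1
  · -- n = 1
    refine ⟨1, {1}, ⟨by simp, ?_, ?_, 1, by simp⟩, ?_, by simp, ?_⟩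
    · intro a ha; simp at ha; omega
    · intro a; rw [Multiset.count_singleton]; split <;> omega
    · simp [← h1]
    · intro a ha; simp at ha; omega
  · -- n ≥ 2
    have hnn : n < n ^ (2 * m - 1) := by
      calc n = n ^ 1 := (pow_one n).symm
      _ < n ^ (2 * m - 1) := Nat.pow_lt_pow_right h1 (by omega)
    refine ⟨n ^ (2 * m - 1), n ::ₘ {n ^ (2 * m - 1)},
      ⟨by simp, ?_, ?_, n ^ 2, ?_⟩, by simp, by simp, ?_⟩
    · intro a ha
      simp only [Multiset.mem_cons, Multiset.mem_singleton] at ha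
      rcases ha with rfl | rfl
      · omega
      · positivity
    · intro a
      rw [Multiset.count_cons, Multiset.count_singleton]
      have : ¬(a = n ∧ a = n ^ (2 * m - 1)) := by rintro ⟨rfl, h⟩; omega
      split <;> split <;> omega
    · rw [Multiset.prod_cons, Multiset.prod_singleton, ← pow_succ', ← pow_mul]
      congr 1
      omega
    · intro a ha
      simp only [Multiset.mem_cons, Multiset.mem_singleton] at ha
      rcases ha with rfl | rfl
      · exact ⟨le_refl _, le_of_lt hnn⟩
      · exact ⟨le_of_lt hnn, le_refl _⟩

theorem stmt_14 (m : ℕ) (hm : m.Prime) :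
    ∀ n n' : ℕ, 0 < n → n < n' → gm m n ≠ gm m n' := by
  intro n n' hn hlt heq
  have hn' : 0 < n' := hn.trans hlt
  have hmpos : 0 < m := hm.pos
  haveI : Fact m.Prime := ⟨hm⟩
  have hmem : gm m n ∈ {s | ∃ M : Multiset ℕ, IsMProdSeq m M ∧ n ∈ M ∧ s ∈ M ∧
      ∀ a ∈ M, n ≤ a ∧ a ≤ s} := by
    rw [gm]; exact Nat.sInf_mem (gm_set_nonempty m n hm.two_le hn)
  have hmem' : gm m n' ∈ {s | ∃ M : Multiset ℕ, IsMProdSeq m M ∧ n' ∈ M ∧ s ∈ M ∧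
      ∀ a ∈ M, n' ≤ a ∧ a ≤ s} := by
    rw [gm]; exact Nat.sInf_mem (gm_set_nonempty m n' hm.two_le hn')
  rw [← heq] at hmem'
  set s := gm m n with hs
  obtain ⟨M, hM, hnM, hsM, hbM⟩ := hmem
  obtain ⟨M', hM', hn'M', hsM', hbM'⟩ := hmem'
  obtain ⟨hMne, hMpos, hMcount, R, hR⟩ := hM
  obtain ⟨hM'ne, hM'pos, hM'count, R', hR'⟩ := hM'
  set c := M.count s with hcdef
  set c' := M'.count s with hc'def
  have hc : 0 < c := Multiset.count_pos.mpr hsM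
  have hc' : 0 < c' := Multiset.count_pos.mpr hsM'
  have hc'm : ¬ (m ∣ c') := Nat.not_dvd_of_pos_of_lt hc' (hM'count s)
  have hc'0 : (c' : ZMod m) ≠ 0 := by
    rw [Ne, ZMod.natCast_eq_zero_iff]; exact hc'm
  set k := ((-(c : ZMod m)) * (c' : ZMod m)⁻¹).val with hk
  have hkey : ((c + k * c' : ℕ) : ZMod m) = 0 := by
    push_cast
    rw [hk, ZMod.natCast_val, ZMod.cast_id, mul_assoc,
      inv_mul_cancel₀ hc'0, mul_one, add_neg_cancel]
  have hdvd : m ∣ c + k * c' := (ZMod.natCast_eq_zero_iff _ _).mp hkey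
  -- the combined multiset
  set P := M + k • M' with hP
  have hPcount : ∀ a, P.count a = M.count a + k * M'.count a := by
    intro a; simp [hP, Multiset.count_nsmul]
  have hnM' : M'.count n = 0 := by
    rw [Multiset.count_eq_zero]
    intro h
    have := (hbM' n h).1
    omega
  have hPmem : ∀ a, a ∈ P → a ∈ M ∨ a ∈ M' := by
    intro a ha
    rw [← Multiset.count_pos, hPcount] at ha
    by_cases h1 : a ∈ M
    · exact Or.inl h1
    · right
      rw [← Multiset.count_pos]
      have h2 : M.count a = 0 := Multiset.count_eq_zero.mpr h1
      rw [h2] at ha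
      by_contra h3
      rw [not_lt, Nat.le_zero] at h3
      rw [h3] at ha
      simp at ha
  have hPpos : ∀ a ∈ P, 0 < a := fun a ha =>
    (hPmem a ha).elim (hMpos a) (hM'pos a)
  have hPle : ∀ a ∈ P, a ≤ s := fun a ha =>
    (hPmem a ha).elim (fun h => (hbM a h).2) (fun h => (hbM' a h).2)
  have hPge : ∀ a ∈ P, n ≤ a := fun a ha =>
    (hPmem a ha).elim (fun h => (hbM a h).1)
      (fun h => le_of_lt (lt_of_lt_of_le hlt (hbM' a h).1))
  -- the reduced multiset
  set N : Multiset ℕ := ∑ a ∈ P.toFinset, Multiset.replicate (P.count a % m) a with hN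
  have hNcount : ∀ b, N.count b = P.count b % m := by
    intro b
    rw [hN, Multiset.count_sum']
    simp only [Multiset.count_replicate]
    rw [Finset.sum_ite_eq']
    by_cases hb : b ∈ P.toFinset
    · rw [if_pos hb]
    · have h0 : P.count b = 0 := by
        rw [Multiset.count_eq_zero]
        exact fun h => hb (Multiset.mem_toFinset.mpr h)
      rw [if_neg hb, h0, Nat.zero_mod]
  have hNsub : ∀ a ∈ N, a ∈ P := by
    intro a ha
    rw [← Multiset.count_pos, hNcount] at ha
    rw [← Multiset.count_pos]
    have := Nat.mod_le (P.count a) m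
    omega
  have hNn : n ∈ N := by
    rw [← Multiset.count_pos, hNcount, hPcount, hnM', Nat.mul_zero, Nat.add_zero,
      Nat.mod_eq_of_lt (hMcount n)]
    exact Multiset.count_pos.mpr hnM
  have hNs : s ∉ N := by
    intro h
    rw [← Multiset.count_pos, hNcount, hPcount, ← hcdef, ← hc'def] at h
    obtain ⟨q, hq⟩ := hdvd
    rw [hq, Nat.mul_mod_right] at h
    exact lt_irrefl 0 h
  have hNne : N ≠ 0 := by
    intro h
    rw [h] at hNn
    simp at hNn
  -- product of P
  have hPprod : P.prod = (R * R' ^ k) ^ m := by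
    rw [hP, Multiset.prod_add, Multiset.prod_nsmul, hR, hR']
    ring
  have hNprod : N.prod = ∏ a ∈ P.toFinset, a ^ (P.count a % m) := by
    rw [hN, Multiset.prod_sum]
    exact Finset.prod_congr rfl fun a _ => Multiset.prod_replicate _ _
  set B := ∏ a ∈ P.toFinset, a ^ (P.count a / m) with hB
  have hsplit : P.prod = N.prod * B ^ m := by
    rw [Finset.prod_multiset_count, hNprod, hB, ← Finset.prod_pow, ← Finset.prod_mul_distrib]
    refine Finset.prod_congr rfl fun a _ => ?_
    rw [← pow_mul, ← pow_add, Nat.mod_add_div']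
  have hBpos : 0 < B := Finset.prod_pos fun a ha =>
    pow_pos (hPpos a (Multiset.mem_toFinset.mp ha)) _
  have hdvdB : B ∣ R * R' ^ k := by
    have h1 : B ^ m ∣ (R * R' ^ k) ^ m := ⟨N.prod, by rw [← hPprod, hsplit]; ring⟩
    exact (Nat.pow_dvd_pow_iff hmpos.ne').mp h1
  obtain ⟨C, hC⟩ := hdvdB
  have hNprodpow : N.prod = C ^ m := by
    have h2 : N.prod * B ^ m = C ^ m * B ^ m := by
      rw [← hsplit, hPprod, hC]; ring
    exact Nat.eq_of_mul_eq_mul_right (pow_pos hBpos m) h2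
  -- the maximum of N
  have hFne : N.toFinset.Nonempty := ⟨n, Multiset.mem_toFinset.mpr hNn⟩
  set t := N.toFinset.max' hFne with ht
  have htN : t ∈ N := Multiset.mem_toFinset.mp (N.toFinset.max'_mem hFne)
  have hletN : ∀ a ∈ N, a ≤ t := fun a ha =>
    N.toFinset.le_max' a (Multiset.mem_toFinset.mpr ha)
  have hts : t < s := lt_of_le_of_ne (hPle t (hNsub t htN)) fun h => hNs (h ▸ htN)
  have hsle : s ≤ t := by
    rw [hs, gm]
    refine Nat.sInf_le ⟨N, ⟨hNne, fun a ha => hPpos a (hNsub a ha),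
      fun a => by rw [hNcount]; exact Nat.mod_lt _ hmpos, C, hNprodpow⟩,
      hNn, htN, fun a ha => ⟨hPge a (hNsub a ha), hletN a ha⟩⟩
  omega
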